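/- Fix b > 0 and for each positive integer n let X_{n,b} be the random variable with P(X_{n,b} = n) = e^{-bn} and P(X_{n,b} = 0) = 1 - e^{-bn}. Then for every real a ≠ 0, lim_{n→∞} (1/n)·K_a(X_{n,b}) equals 0 if a < b and equals (a−b)/a if a ≥ b; and lim_{n→∞} (1/n)·E[X_{n,b}] = 0. -/

import Mathlib

open Filter

/-- For the two-point random variable `X_{n,b}` with `P(X_{n,b} = n) = e^{-bn}` and
`P(X_{n,b} = 0) = 1 - e^{-bn}` (so `K_a(X_{n,b}) = (1/a)·log((1 - e^{-bn}) + e^{(a-b)n})`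
and `E[X_{n,b}] = n·e^{-bn}`): as `n → ∞`, `(1/n)·K_a(X_{n,b})` converges to `0` if
`a < b` and to `(a - b)/a` if `a ≥ b`, while `(1/n)·E[X_{n,b}]` converges to `0`. -/
theorem limit_K_two_point (b : ℝ) (hb : 0 < b) (a : ℝ) (ha : a ≠ 0) :
    Tendsto (fun n : ℕ =>
        (1 / (n : ℝ)) *
          ((1 / a) * Real.log ((1 - Real.exp (-b * n)) + Real.exp ((a - b) * n))))
      atTop (nhds (if a < b then 0 else (a - b) / a)) ∧
    Tendsto (fun n : ℕ => (1 / (n : ℝ)) * ((n : ℝ) * Real.exp (-b * n)))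
      atTop (nhds 0) := by
  have hexp_neg_b : Tendsto (fun n : ℕ => Real.exp (-b * n)) atTop (nhds 0) := by
    have h : ∀ n : ℕ, Real.exp (-b * n) = Real.exp (-b) ^ n := by
      intro n; rw [← Real.exp_nat_mul]; ring_nf
    simp only [h]
    exact tendsto_pow_atTop_nhds_zero_of_lt_one (Real.exp_nonneg _)
      (Real.exp_lt_one_iff.mpr (by linarith))
  constructor
  · by_cases hab : a < b
    · rw [if_pos hab]
      have hexp_ab : Tendsto (fun n : ℕ => Real.exp ((a - b) * n)) atTop (nhds 0) := by
        have h : ∀ n : ℕ, Real.exp ((a - b) * n) = Real.exp (a - b) ^ n := by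
          intro n; rw [← Real.exp_nat_mul]; ring_nf
        simp only [h]
        exact tendsto_pow_atTop_nhds_zero_of_lt_one (Real.exp_nonneg _)
          (Real.exp_lt_one_iff.mpr (by linarith))
      have harg : Tendsto (fun n : ℕ => (1 - Real.exp (-b * n)) + Real.exp ((a - b) * n))
          atTop (nhds 1) := by
        have := ((tendsto_const_nhds (x := (1:ℝ))).sub hexp_neg_b).add hexp_ab
        simpa using this
      have hlog := harg.log one_ne_zero
      rw [Real.log_one] at hlog
      have h1 : Tendsto (fun n : ℕ => (1 : ℝ) / n) atTop (nhds 0) :=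
        tendsto_one_div_atTop_nhds_zero_nat
      have := h1.mul ((tendsto_const_nhds (x := (1:ℝ)/a)).mul hlog)
      simpa using this
    · rw [if_neg hab]
      push_neg at hab
      have ha' : 0 < a := lt_of_lt_of_le hb hab
      set g : ℕ → ℝ := fun n => (1 - Real.exp (-b * n)) * Real.exp ((b - a) * n) + 1 with hg
      have hg1 : ∀ n : ℕ, 1 ≤ g n := by
        intro n
        have h1 : Real.exp (-b * n) ≤ 1 := by
          apply Real.exp_le_one_iff.mpr
          have : (0:ℝ) ≤ n := Nat.cast_nonneg n
          nlinarith
        have h2 : 0 ≤ (1 - Real.exp (-b * n)) * Real.exp ((b - a) * n) :=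
          mul_nonneg (by linarith) (Real.exp_nonneg _)
        simp only [hg]; linarith
      have hg2 : ∀ n : ℕ, g n ≤ 2 := by
        intro n
        have h1 : 0 ≤ Real.exp (-b * n) := Real.exp_nonneg _
        have h2 : Real.exp ((b - a) * n) ≤ 1 := by
          apply Real.exp_le_one_iff.mpr
          have : (0:ℝ) ≤ n := Nat.cast_nonneg n
          nlinarith
        have h3 : (1 - Real.exp (-b * n)) * Real.exp ((b - a) * n) ≤ 1 :=
          mul_le_one₀ (by linarith) (Real.exp_nonneg _) h2
        simp only [hg]; linarith
      have harg_eq : ∀ n : ℕ, (1 - Real.exp (-b * n)) + Real.exp ((a - b) * n)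
          = Real.exp ((a - b) * n) * g n := by
        intro n
        simp only [hg]
        rw [mul_add, mul_one, ← mul_assoc, mul_comm (Real.exp ((a-b)*n)),
          mul_assoc, ← Real.exp_add]
        ring_nf
        rw [Real.exp_zero]
        ring
      have hsmall : Tendsto (fun n : ℕ => (1 / (n : ℝ)) * ((1 / a) * Real.log (g n)))
          atTop (nhds 0) := by
        apply squeeze_zero (g := fun n : ℕ => (1 / (n:ℝ)) * ((1 / a) * Real.log 2))
        · intro n
          have : 0 ≤ Real.log (g n) := Real.log_nonneg (hg1 n)
          positivity
        · intro n
          have hl2 : Real.log (g n) ≤ Real.log 2 :=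
            Real.log_le_log (lt_of_lt_of_le one_pos (hg1 n)) (hg2 n)
          have hn : (0:ℝ) ≤ 1 / (n:ℝ) := by positivity
          have ha2 : (0:ℝ) ≤ 1 / a := by positivity
          exact mul_le_mul_of_nonneg_left (mul_le_mul_of_nonneg_left hl2 ha2) hn
        · have := tendsto_one_div_atTop_nhds_zero_nat.mul
            (tendsto_const_nhds (x := (1:ℝ)/a * Real.log 2))
          simpa [mul_assoc] using this
      have hF : Tendsto (fun n : ℕ => (a - b) / a + (1 / (n : ℝ)) * ((1 / a) * Real.log (g n)))
          atTop (nhds ((a - b) / a)) := by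
        have := (tendsto_const_nhds (x := (a - b)/a)).add hsmall
        simpa using this
      apply Tendsto.congr' _ hF
      filter_upwards [eventually_ge_atTop 1] with n hn
      have hn0 : (n : ℝ) ≠ 0 := Nat.cast_ne_zero.mpr (by omega)
      have hgn : g n ≠ 0 := by have := hg1 n; linarith
      rw [harg_eq n, Real.log_mul (Real.exp_ne_zero _) hgn, Real.log_exp]
      field_simp
  · apply Tendsto.congr' _ hexp_neg_b
    filter_upwards [eventually_ge_atTop 1] with n hn
    have hn0 : (n : ℝ) ≠ 0 := Nat.cast_ne_zero.mpr (by omega)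
    field_simp
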